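/- arXiv:1507.01065 — 2 statements merged into one kernel-verified Lean document; each statement's English description precedes it below -/
import Mathlib

section
/- A category C with an ordinal degree function on its objects is a c-Reedy category (with the wide subcategories C⃡, C⃗, C⃖ given as data satisfying: C⃡ ⊆ C⃗ ∩ C⃖; every morphism of C⃡ is level; every morphism of C⃗ \ C⃡ strictly raises degree and every morphism of C⃖ \ C⃡ strictly lowers degree; every morphism factors as a C⃖-morphism followed by a C⃗-morphism, with the category of such factorizations and C⃡-connecting-maps connected; and for every x and degree δ < deg(x), the functor C⃖(x,−) : C⃡_{=δ} → Set is a coproduct of retracts of representables) if and only if C is an almost c-Reedy category and the classes of basic non-strictly degree-raising and basic non-strictly degree-lowering morphisms are each closed under composition. -/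
open CategoryTheory Category

universe w v u

variable {C : Type u} [Category.{v} C]

/-- A fundamental factorization of `f : x ⟶ y`: a factorization through an
object of degree strictly smaller than the degrees of both `x` and `y`. -/
structure FdFact (deg : C → Ordinal.{w}) {x y : C} (f : x ⟶ y) where
  z : C
  g : x ⟶ z
  h : z ⟶ y
  fac : g ≫ h = f
  lt_src : deg z < deg x
  lt_tgt : deg z < deg y

/-- A morphism is basic if it admits no fundamental factorization. -/
def Basic (deg : C → Ordinal.{w}) {x y : C} (f : x ⟶ y) : Prop :=
  IsEmpty (FdFact deg f)

/-- A connecting morphism between two fundamental factorizations of `f`. -/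
def FdConn (deg : C → Ordinal.{w}) {x y : C} {f : x ⟶ y}
    (F F' : FdFact deg f) : Prop :=
  ∃ k : F.z ⟶ F'.z, F.g ≫ k = F'.g ∧ k ≫ F'.h = F.h

/-- Two fundamental factorizations are connected by a zigzag of connecting
morphisms. -/
def FdZigzag (deg : C → Ordinal.{w}) {x y : C} {f : x ⟶ y} :
    FdFact deg f → FdFact deg f → Prop :=
  Relation.ReflTransGen (fun F F' => FdConn deg F F' ∨ FdConn deg F' F)

/-- `C` (with the degree function `deg`) is almost-Reedy: the basic level
morphisms are exactly the identities, and the category of fundamental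
factorizations of any (non-basic) morphism is connected. -/
def AlmostReedy (deg : C → Ordinal.{w}) : Prop :=
  (∀ x : C, Basic deg (𝟙 x)) ∧
  (∀ ⦃x y : C⦄ (f : x ⟶ y), deg x = deg y → Basic deg f → x = y ∧ HEq f (𝟙 x)) ∧
  (∀ ⦃x y : C⦄ (f : x ⟶ y) (F F' : FdFact deg f), FdZigzag deg F F')

/-- The class `C⃖` of basic morphisms that non-strictly lower degree. -/
def Lowering (deg : C → Ordinal.{w}) {x y : C} (f : x ⟶ y) : Prop :=
  Basic deg f ∧ deg y ≤ deg x

/-- The class `C⃗` of basic morphisms that non-strictly raise degree. -/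
def Raising (deg : C → Ordinal.{w}) {x y : C} (f : x ⟶ y) : Prop :=
  Basic deg f ∧ deg x ≤ deg y

/-- A basic level morphism: basic, with domain and codomain of equal degree. -/
def BasicLevel (deg : C → Ordinal.{w}) {x y : C} (f : x ⟶ y) : Prop :=
  Basic deg f ∧ deg x = deg y

/-- `C` (with the degree function `deg`) is almost c-Reedy:
(1) all identities are basic;
(2) basic level morphisms are closed under composition;
(3) the category of fundamental factorizations of any (non-basic) morphism is
    connected;
(4) the composite of a basic strictly-degree-decreasing morphism followed by a
    basic level morphism is basic;
(5) for each `x` and each degree `δ < deg x`, the functor of basic morphisms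
    from `x` on the `δ`-th stratum is a coproduct of retracts of representables,
    phrased elementarily: any cospan of basic level morphisms under basic
    strictly-decreasing morphisms out of `x` admits a compatible cone. -/
def AlmostCReedy (deg : C → Ordinal.{w}) : Prop :=
  (∀ x : C, Basic deg (𝟙 x)) ∧
  (∀ ⦃x y z : C⦄ (f : x ⟶ y) (g : y ⟶ z), deg x = deg y → deg y = deg z →
    Basic deg f → Basic deg g → Basic deg (f ≫ g)) ∧
  (∀ ⦃x y : C⦄ (f : x ⟶ y) (F F' : FdFact deg f), FdZigzag deg F F') ∧
  (∀ ⦃x y z : C⦄ (f : x ⟶ y) (g : y ⟶ z), Basic deg f → deg y < deg x →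
    Basic deg g → deg y = deg z → Basic deg (f ≫ g)) ∧
  (∀ ⦃x y₁ y₂ y₃ : C⦄ (f₁ : x ⟶ y₁) (f₂ : x ⟶ y₂) (f₃ : x ⟶ y₃)
      (g₁ : y₁ ⟶ y₂) (g₃ : y₃ ⟶ y₂),
    deg y₁ < deg x → deg y₁ = deg y₂ → deg y₂ = deg y₃ →
    Basic deg f₁ → Basic deg f₂ → Basic deg f₃ → Basic deg g₁ → Basic deg g₃ →
    f₁ ≫ g₁ = f₂ → f₃ ≫ g₃ = f₂ →
    ∃ (y₀ : C) (f₀ : x ⟶ y₀) (h₁ : y₀ ⟶ y₁) (h₃ : y₀ ⟶ y₃),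
      deg y₀ = deg y₁ ∧ Basic deg f₀ ∧ Basic deg h₁ ∧ Basic deg h₃ ∧
      f₀ ≫ h₁ = f₁ ∧ f₀ ≫ h₃ = f₃ ∧ h₁ ≫ g₁ = h₃ ≫ g₃)

/-- A `(C⃖, C⃗)`-factorization of `f`. -/
structure MPFact (P Mi : MorphismProperty C) {x y : C} (f : x ⟶ y) where
  z : C
  g : x ⟶ z
  h : z ⟶ y
  memMi : Mi g
  memP : P h
  fac : g ≫ h = f

/-- A connecting morphism between two `(C⃖, C⃗)`-factorizations lying in the
wide subcategory `W = C⃡`. -/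
def MPConn (W : MorphismProperty C) {P Mi : MorphismProperty C} {x y : C}
    {f : x ⟶ y} (a b : MPFact P Mi f) : Prop :=
  ∃ k : a.z ⟶ b.z, W k ∧ a.g ≫ k = b.g ∧ k ≫ b.h = a.h

/-- The notion of c-Reedy category, with the wide subcategories `W = C⃡`,
`P = C⃗`, `Mi = C⃖` given as data:
`C⃡ ⊆ C⃗ ∩ C⃖`; every `C⃡`-morphism is level; every `C⃗`-morphism outside `C⃡`
strictly raises degree and every `C⃖`-morphism outside `C⃡` strictly lowers
degree; every morphism admits a `C⃖`-then-`C⃗` factorization and the category of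
such factorizations with `C⃡`-connecting maps is connected; and for every `x`
and degree `δ < deg x` the functor `C⃖(x,−) : C⃡_{=δ} → Set` is a coproduct of
retracts of representables (phrased elementarily via cones). -/
def IsCReedyWith (deg : C → Ordinal.{w}) (W P Mi : MorphismProperty C) : Prop :=
  (∀ x : C, W (𝟙 x)) ∧ (∀ x : C, P (𝟙 x)) ∧ (∀ x : C, Mi (𝟙 x)) ∧
  (∀ ⦃x y z : C⦄ (f : x ⟶ y) (g : y ⟶ z), W f → W g → W (f ≫ g)) ∧
  (∀ ⦃x y z : C⦄ (f : x ⟶ y) (g : y ⟶ z), P f → P g → P (f ≫ g)) ∧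
  (∀ ⦃x y z : C⦄ (f : x ⟶ y) (g : y ⟶ z), Mi f → Mi g → Mi (f ≫ g)) ∧
  (∀ ⦃x y : C⦄ (f : x ⟶ y), W f → P f ∧ Mi f) ∧
  (∀ ⦃x y : C⦄ (f : x ⟶ y), W f → deg x = deg y) ∧
  (∀ ⦃x y : C⦄ (f : x ⟶ y), P f → ¬ W f → deg x < deg y) ∧
  (∀ ⦃x y : C⦄ (f : x ⟶ y), Mi f → ¬ W f → deg y < deg x) ∧
  (∀ ⦃x y : C⦄ (f : x ⟶ y), Nonempty (MPFact P Mi f) ∧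
    ∀ a b : MPFact P Mi f,
      Relation.ReflTransGen (fun a b => MPConn W a b ∨ MPConn W b a) a b) ∧
  (∀ ⦃x y₁ y₂ y₃ : C⦄ (f₁ : x ⟶ y₁) (f₂ : x ⟶ y₂) (f₃ : x ⟶ y₃)
      (g₁ : y₁ ⟶ y₂) (g₃ : y₃ ⟶ y₂),
    deg y₁ < deg x → Mi f₁ → Mi f₂ → Mi f₃ → W g₁ → W g₃ →
    f₁ ≫ g₁ = f₂ → f₃ ≫ g₃ = f₂ →
    ∃ (y₀ : C) (f₀ : x ⟶ y₀) (h₁ : y₀ ⟶ y₁) (h₃ : y₀ ⟶ y₃),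
      deg y₀ = deg y₁ ∧ Mi f₀ ∧ W h₁ ∧ W h₃ ∧
      f₀ ≫ h₁ = f₁ ∧ f₀ ≫ h₃ = f₃ ∧ h₁ ≫ g₁ = h₃ ≫ g₃)

namespace CReedyAux

variable (deg : C → Ordinal.{w})

abbrev RaP : MorphismProperty C := fun _ _ f => Raising deg f
abbrev LoP : MorphismProperty C := fun _ _ f => Lowering deg f
abbrev WbP : MorphismProperty C := fun _ _ f => BasicLevel deg f

abbrev MPZ {x y : C} {f : x ⟶ y} (A B : MPFact (RaP deg) (LoP deg) f) : Prop :=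
  Relation.ReflTransGen
    (fun a b => MPConn (WbP deg) a b ∨ MPConn (WbP deg) b a) A B

structure Hyp : Prop where
  hid : ∀ x : C, Basic deg (𝟙 x)
  hPc : ∀ ⦃x y z : C⦄ (f : x ⟶ y) (g : y ⟶ z),
    Raising deg f → Raising deg g → Raising deg (f ≫ g)
  hMc : ∀ ⦃x y z : C⦄ (f : x ⟶ y) (g : y ⟶ z),
    Lowering deg f → Lowering deg g → Lowering deg (f ≫ g)
  hconn : ∀ ⦃x y : C⦄ (f : x ⟶ y) (F F' : FdFact deg f), FdZigzag deg F F'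

variable {deg}

lemma mpz_symm {x y : C} {f : x ⟶ y} {A B : MPFact (RaP deg) (LoP deg) f}
    (h : MPZ deg A B) : MPZ deg B A :=
  haveI : Std.Symm (fun a b : MPFact (RaP deg) (LoP deg) f =>
      MPConn (WbP deg) a b ∨ MPConn (WbP deg) b a) := ⟨fun _ _ hh => Or.symm hh⟩
  Relation.ReflTransGen.symmetric.symm _ _ h

lemma exists_fact (H : Hyp deg) :
    ∀ (δ : Ordinal.{w}) {x y : C} (f : x ⟶ y), min (deg x) (deg y) ≤ δ →
      ∃ (z : C) (g : x ⟶ z) (h : z ⟶ y),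
        Lowering deg g ∧ Raising deg h ∧ g ≫ h = f := by
  intro δ
  induction δ using Ordinal.induction with
  | _ δ IH =>
    intro x y f hδ
    by_cases hb : Basic deg f
    · rcases le_total (deg x) (deg y) with hxy | hyx
      · exact ⟨x, 𝟙 x, f, ⟨H.hid x, le_rfl⟩, ⟨hb, hxy⟩, id_comp f⟩
      · exact ⟨y, f, 𝟙 y, ⟨hb, hyx⟩, ⟨H.hid y, le_rfl⟩, comp_id f⟩
    · obtain ⟨F⟩ := not_isEmpty_iff.mp hb
      have hzδ : deg F.z < δ :=
        lt_of_lt_of_le (lt_min F.lt_src F.lt_tgt) hδ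
      obtain ⟨w, g₁, g₂, hg₁, hg₂, hgfac⟩ := IH _ hzδ F.g (min_le_right _ _)
      obtain ⟨w', h₁, h₂, hh₁, hh₂, hhfac⟩ := IH _ hzδ F.h (min_le_left _ _)
      obtain ⟨v, m₁, m₂, hm₁, hm₂, hmfac⟩ :=
        IH _ hzδ (g₂ ≫ h₁) (le_trans (min_le_left _ _) hg₂.2)
      refine ⟨v, g₁ ≫ m₁, m₂ ≫ h₂, H.hMc _ _ hg₁ hm₁, H.hPc _ _ hm₂ hh₂, ?_⟩
      calc (g₁ ≫ m₁) ≫ m₂ ≫ h₂ = g₁ ≫ (m₁ ≫ m₂) ≫ h₂ := by simp only [assoc]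
        _ = g₁ ≫ (g₂ ≫ h₁) ≫ h₂ := by rw [hmfac]
        _ = (g₁ ≫ g₂) ≫ (h₁ ≫ h₂) := by simp only [assoc]
        _ = F.g ≫ F.h := by rw [hgfac, hhfac]
        _ = f := F.fac

lemma exists_fact' (H : Hyp deg) {x y : C} (f : x ⟶ y) :
    ∃ (z : C) (g : x ⟶ z) (h : z ⟶ y),
      Lowering deg g ∧ Raising deg h ∧ g ≫ h = f :=
  exists_fact H _ f le_rfl

lemma nonbasic_lt (H : Hyp deg) {x y : C} {f : x ⟶ y} (hb : ¬ Basic deg f)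
    (A : MPFact (RaP deg) (LoP deg) f) : deg A.z < deg x ∧ deg A.z < deg y := by
  constructor
  · rcases lt_or_eq_of_le A.memMi.2 with h | h
    · exact h
    · exact absurd (A.fac ▸ H.hPc A.g A.h ⟨A.memMi.1, h.ge⟩ A.memP).1 hb
  · rcases lt_or_eq_of_le A.memP.2 with h | h
    · exact h
    · exact absurd (A.fac ▸ H.hMc A.g A.h A.memMi ⟨A.memP.1, h.ge⟩).1 hb

abbrev IHty (δ : Ordinal.{w}) : Prop :=
  ∀ δ' < δ, ∀ {x y : C} (f : x ⟶ y), min (deg x) (deg y) ≤ δ' →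
    ∀ A B : MPFact (RaP deg) (LoP deg) f, MPZ deg A B

lemma stepB (H : Hyp deg) {x y : C} {f : x ⟶ y} {w : C} (d : x ⟶ w) (e : w ⟶ y)
    (hd : Lowering deg d) (hfac : d ≫ e = f) :
    ∃ (A : MPFact (RaP deg) (LoP deg) f) (k : w ⟶ A.z),
      d ≫ k = A.g ∧ k ≫ A.h = e := by
  obtain ⟨v, e₁, e₂, he₁, he₂, hefac⟩ := exists_fact' H e
  exact ⟨⟨v, d ≫ e₁, e₂, H.hMc _ _ hd he₁, he₂, by rw [assoc, hefac, hfac]⟩,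
    e₁, rfl, hefac⟩

lemma stepC (H : Hyp deg) {δ : Ordinal.{w}} (IH : IHty (deg := deg) δ)
    {x y : C} {f : x ⟶ y} {w : C} (d : x ⟶ w) (e : w ⟶ y)
    (hd : Lowering deg d) (hwx : deg w < deg x) (hwy : deg w < deg y)
    (hwδ : deg w < δ) (hfac : d ≫ e = f)
    (A : MPFact (RaP deg) (LoP deg) f) (r : w ⟶ A.z)
    (hr1 : d ≫ r = A.g) (hr2 : r ≫ A.h = e)
    (B : MPFact (RaP deg) (LoP deg) f) (r' : w ⟶ B.z)
    (hr'1 : d ≫ r' = B.g) (hr'2 : r' ≫ B.h = e) :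
    MPZ deg A B := by
  obtain ⟨s, r₁, r₂, hr₁, hr₂, hrfac⟩ := exists_fact' H r
  obtain ⟨s', r'₁, r'₂, hr'₁, hr'₂, hr'fac⟩ := exists_fact' H r'
  have hE1fac : r₁ ≫ (r₂ ≫ A.h) = e := by rw [← assoc, hrfac, hr2]
  have hE2fac : r'₁ ≫ (r'₂ ≫ B.h) = e := by rw [← assoc, hr'fac, hr'2]
  let E₁ : MPFact (RaP deg) (LoP deg) e :=
    ⟨s, r₁, r₂ ≫ A.h, hr₁, H.hPc _ _ hr₂ A.memP, hE1fac⟩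
  let E₂ : MPFact (RaP deg) (LoP deg) e :=
    ⟨s', r'₁, r'₂ ≫ B.h, hr'₁, H.hPc _ _ hr'₂ B.memP, hE2fac⟩
  have hze : MPZ deg E₁ E₂ := IH (deg w) hwδ e (min_le_left _ _) E₁ E₂
  let T : MPFact (RaP deg) (LoP deg) e → MPFact (RaP deg) (LoP deg) f :=
    fun Q => ⟨Q.z, d ≫ Q.g, Q.h, H.hMc _ _ hd Q.memMi, Q.memP,
      by rw [assoc, Q.fac, hfac]⟩
  have hzf : MPZ deg (T E₁) (T E₂) := by
    refine Relation.ReflTransGen.lift T (fun a b hab => ?_) _ _ hze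
    rcases hab with ⟨k, hk, h1, h2⟩ | ⟨k, hk, h1, h2⟩
    · exact Or.inl ⟨k, hk, by show (d ≫ a.g) ≫ k = d ≫ b.g; rw [assoc, h1], h2⟩
    · exact Or.inr ⟨k, hk, by show (d ≫ b.g) ≫ k = d ≫ a.g; rw [assoc, h1], h2⟩
  have hlev1 : deg s = deg A.z := by
    by_contra hne
    exact A.memMi.1.false ⟨s, d ≫ r₁, r₂, by rw [assoc, hrfac, hr1],
      lt_of_le_of_lt hr₁.2 hwx, lt_of_le_of_ne hr₂.2 hne⟩
  have hlev2 : deg s' = deg B.z := by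
    by_contra hne
    exact B.memMi.1.false ⟨s', d ≫ r'₁, r'₂, by rw [assoc, hr'fac, hr'1],
      lt_of_le_of_lt hr'₁.2 hwx, lt_of_le_of_ne hr'₂.2 hne⟩
  have edge1 : MPConn (WbP deg) (T E₁) A :=
    ⟨r₂, ⟨hr₂.1, hlev1⟩, by show (d ≫ r₁) ≫ r₂ = A.g; rw [assoc, hrfac, hr1], rfl⟩
  have edge2 : MPConn (WbP deg) (T E₂) B :=
    ⟨r'₂, ⟨hr'₂.1, hlev2⟩, by show (d ≫ r'₁) ≫ r'₂ = B.g; rw [assoc, hr'fac, hr'1], rfl⟩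
  have s1 : MPZ deg A (T E₁) := Relation.ReflTransGen.single (Or.inr edge1)
  have s2 : MPZ deg (T E₂) B := Relation.ReflTransGen.single (Or.inl edge2)
  exact s1.trans (hzf.trans s2)

lemma lift2 (H : Hyp deg) {δ : Ordinal.{w}} (IH : IHty (deg := deg) δ)
    {x y : C} {f : x ⟶ y} (hδ : min (deg x) (deg y) ≤ δ)
    {z : C} (gbar : x ⟶ z) (hbar : z ⟶ y) (hzx : deg z < deg x) (hzy : deg z < deg y)
    (hzfac : gbar ≫ hbar = f) :
    ∀ (G G' : MPFact (RaP deg) (LoP deg) gbar), MPZ deg G G' →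
      ∀ (AA AA' : MPFact (RaP deg) (LoP deg) f),
        (∃ k : G.z ⟶ AA.z, G.g ≫ k = AA.g ∧ k ≫ AA.h = G.h ≫ hbar) →
        (∃ k' : G'.z ⟶ AA'.z, G'.g ≫ k' = AA'.g ∧ k' ≫ AA'.h = G'.h ≫ hbar) →
        MPZ deg AA AA' := by
  intro G G' hzz
  induction hzz with
  | refl =>
    rintro AA AA' ⟨k, hk1, hk2⟩ ⟨k', hk1', hk2'⟩
    have hGz : deg G.z ≤ deg z := G.memP.2
    exact stepC H IH G.g (G.h ≫ hbar) G.memMi (lt_of_le_of_lt hGz hzx)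
      (lt_of_le_of_lt hGz hzy)
      (lt_of_lt_of_le (lt_min (lt_of_le_of_lt hGz hzx) (lt_of_le_of_lt hGz hzy)) hδ)
      (by rw [← assoc, G.fac, hzfac]) AA k hk1 hk2 AA' k' hk1' hk2'
  | @tail Q G' hzz' e ih =>
    intro AA AA' w1 w3
    have hQfac : Q.g ≫ (Q.h ≫ hbar) = f := by rw [← assoc, Q.fac, hzfac]
    obtain ⟨AA'', k'', hk''1, hk''2⟩ := stepB H Q.g (Q.h ≫ hbar) Q.memMi hQfac
    have hAA'' := ih AA AA'' w1 ⟨k'', hk''1, hk''2⟩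
    have hQz : deg Q.z ≤ deg z := Q.memP.2
    have hG'z : deg G'.z ≤ deg z := G'.memP.2
    obtain ⟨k', hk1', hk2'⟩ := w3
    rcases e with ⟨k, hkW, h1, h2⟩ | ⟨k, hkW, h1, h2⟩
    · -- MPConn Q G' : k : Q.z ⟶ G'.z, Q.g ≫ k = G'.g, k ≫ G'.h = Q.h
      have c1 : Q.g ≫ (k ≫ k') = AA'.g := by rw [← assoc, h1, hk1']
      have c2 : (k ≫ k') ≫ AA'.h = Q.h ≫ hbar := by
        rw [assoc, hk2', ← assoc, h2]
      exact hAA''.trans (stepC H IH Q.g (Q.h ≫ hbar) Q.memMi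
        (lt_of_le_of_lt hQz hzx) (lt_of_le_of_lt hQz hzy)
        (lt_of_lt_of_le (lt_min (lt_of_le_of_lt hQz hzx) (lt_of_le_of_lt hQz hzy)) hδ)
        hQfac AA'' k'' hk''1 hk''2 AA' (k ≫ k') c1 c2)
    · -- MPConn G' Q : k : G'.z ⟶ Q.z, G'.g ≫ k = Q.g, k ≫ Q.h = G'.h
      have c1 : G'.g ≫ (k ≫ k'') = AA''.g := by rw [← assoc, h1, hk''1]
      have c2 : (k ≫ k'') ≫ AA''.h = G'.h ≫ hbar := by
        rw [assoc, hk''2, ← assoc, h2]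
      have hG'fac : G'.g ≫ (G'.h ≫ hbar) = f := by rw [← assoc, G'.fac, hzfac]
      exact hAA''.trans (mpz_symm (stepC H IH G'.g (G'.h ≫ hbar) G'.memMi
        (lt_of_le_of_lt hG'z hzx) (lt_of_le_of_lt hG'z hzy)
        (lt_of_lt_of_le (lt_min (lt_of_le_of_lt hG'z hzx) (lt_of_le_of_lt hG'z hzy)) hδ)
        hG'fac AA' k' hk1' hk2' AA'' (k ≫ k'') c1 c2))

lemma sameF (H : Hyp deg) {δ : Ordinal.{w}} (IH : IHty (deg := deg) δ)
    {x y : C} {f : x ⟶ y} (hδ : min (deg x) (deg y) ≤ δ)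
    {z : C} (gbar : x ⟶ z) (hbar : z ⟶ y) (hzx : deg z < deg x) (hzy : deg z < deg y)
    (hzfac : gbar ≫ hbar = f)
    {w : C} (d : x ⟶ w) (eD : w ⟶ y) (hd : Lowering deg d)
    (hwx : deg w < deg x) (hwy : deg w < deg y) (hDfac : d ≫ eD = f)
    (p : w ⟶ z) (hp1 : d ≫ p = gbar) (hp2 : p ≫ hbar = eD)
    {w' : C} (d' : x ⟶ w') (eD' : w' ⟶ y) (hd' : Lowering deg d')
    (hwx' : deg w' < deg x) (hwy' : deg w' < deg y) (hDfac' : d' ≫ eD' = f)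
    (p' : w' ⟶ z) (hp1' : d' ≫ p' = gbar) (hp2' : p' ≫ hbar = eD')
    (A : MPFact (RaP deg) (LoP deg) f) (r : w ⟶ A.z)
    (hr1 : d ≫ r = A.g) (hr2 : r ≫ A.h = eD)
    (A' : MPFact (RaP deg) (LoP deg) f) (r' : w' ⟶ A'.z)
    (hr1' : d' ≫ r' = A'.g) (hr2' : r' ≫ A'.h = eD') :
    MPZ deg A A' := by
  obtain ⟨t, p₁, p₂, hp₁, hp₂, hpfac⟩ := exists_fact' H p
  obtain ⟨t', p'₁, p'₂, hp'₁, hp'₂, hp'fac⟩ := exists_fact' H p'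
  have hdhat : Lowering deg (d ≫ p₁) := H.hMc _ _ hd hp₁
  have hdhat' : Lowering deg (d' ≫ p'₁) := H.hMc _ _ hd' hp'₁
  have hfacD : (d ≫ p₁) ≫ (p₂ ≫ hbar) = f := by
    rw [assoc, ← assoc p₁, hpfac, hp2, hDfac]
  have hfacD' : (d' ≫ p'₁) ≫ (p'₂ ≫ hbar) = f := by
    rw [assoc, ← assoc p'₁, hp'fac, hp2', hDfac']
  obtain ⟨Ahat, khat, hk1, hk2⟩ := stepB H (d ≫ p₁) (p₂ ≫ hbar) hdhat hfacD
  obtain ⟨Ahat', khat', hk1', hk2'⟩ := stepB H (d' ≫ p'₁) (p'₂ ≫ hbar) hdhat' hfacD'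
  have hcon1 : d ≫ (p₁ ≫ khat) = Ahat.g := by rw [← assoc, hk1]
  have hcon2 : (p₁ ≫ khat) ≫ Ahat.h = eD := by
    rw [assoc, hk2, ← assoc, hpfac, hp2]
  have hcon1' : d' ≫ (p'₁ ≫ khat') = Ahat'.g := by rw [← assoc, hk1']
  have hcon2' : (p'₁ ≫ khat') ≫ Ahat'.h = eD' := by
    rw [assoc, hk2', ← assoc, hp'fac, hp2']
  have hwδ : deg w < δ := lt_of_lt_of_le (lt_min hwx hwy) hδ
  have hwδ' : deg w' < δ := lt_of_lt_of_le (lt_min hwx' hwy') hδ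
  have hzA : MPZ deg A Ahat :=
    stepC H IH d eD hd hwx hwy hwδ hDfac A r hr1 hr2 Ahat (p₁ ≫ khat) hcon1 hcon2
  have hzA' : MPZ deg A' Ahat' :=
    stepC H IH d' eD' hd' hwx' hwy' hwδ' hDfac' A' r' hr1' hr2' Ahat' (p'₁ ≫ khat') hcon1' hcon2'
  have hG1fac : (d ≫ p₁) ≫ p₂ = gbar := by rw [assoc, hpfac, hp1]
  have hG2fac : (d' ≫ p'₁) ≫ p'₂ = gbar := by rw [assoc, hp'fac, hp1']
  let G₁ : MPFact (RaP deg) (LoP deg) gbar := ⟨t, d ≫ p₁, p₂, hdhat, hp₂, hG1fac⟩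
  let G₂ : MPFact (RaP deg) (LoP deg) gbar := ⟨t', d' ≫ p'₁, p'₂, hdhat', hp'₂, hG2fac⟩
  have hzg : MPZ deg G₁ G₂ :=
    IH (deg z) (lt_of_lt_of_le (lt_min hzx hzy) hδ) gbar (min_le_right _ _) G₁ G₂
  have hmid : MPZ deg Ahat Ahat' :=
    lift2 H IH hδ gbar hbar hzx hzy hzfac G₁ G₂ hzg Ahat Ahat' ⟨khat, hk1, hk2⟩ ⟨khat', hk1', hk2'⟩
  exact (hzA.trans hmid).trans (mpz_symm hzA')

abbrev Wit {x y : C} {f : x ⟶ y} (F : FdFact deg f)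
    (A : MPFact (RaP deg) (LoP deg) f) : Prop :=
  ∃ (w : C) (d : x ⟶ w) (eD : w ⟶ y) (p : w ⟶ F.z),
    Lowering deg d ∧ deg w < deg x ∧ deg w < deg y ∧ d ≫ eD = f ∧
    d ≫ p = F.g ∧ p ≫ F.h = eD ∧
    ∃ r : w ⟶ A.z, d ≫ r = A.g ∧ r ≫ A.h = eD

lemma topLift (H : Hyp deg) {δ : Ordinal.{w}} (IH : IHty (deg := deg) δ)
    {x y : C} {f : x ⟶ y} (hδ : min (deg x) (deg y) ≤ δ) :
    ∀ (F F' : FdFact deg f), FdZigzag deg F F' →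
      ∀ (A A' : MPFact (RaP deg) (LoP deg) f),
        Wit F A → Wit F' A' → MPZ deg A A' := by
  intro F F' hzz
  induction hzz with
  | refl =>
    rintro A A' ⟨w, d, eD, p, hd, hwx, hwy, hDfac, hp1, hp2, r, hr1, hr2⟩
      ⟨w', d', eD', p', hd', hwx', hwy', hDfac', hp1', hp2', r', hr1', hr2'⟩
    exact sameF H IH hδ F.g F.h F.lt_src F.lt_tgt F.fac d eD hd hwx hwy hDfac
      p hp1 hp2 d' eD' hd' hwx' hwy' hDfac' p' hp1' hp2' A r hr1 hr2 A' r' hr1' hr2'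
  | @tail F₀ F'' hzz' e ih =>
    intro A A' w1 w2
    obtain ⟨w₀, g₁, g₂, hg₁, hg₂, hgfac⟩ := exists_fact' H F₀.g
    have hw₀x : deg w₀ < deg x := lt_of_le_of_lt hg₂.2 F₀.lt_src
    have hw₀y : deg w₀ < deg y := lt_of_le_of_lt hg₂.2 F₀.lt_tgt
    have hfac₀ : g₁ ≫ (g₂ ≫ F₀.h) = f := by rw [← assoc, hgfac, F₀.fac]
    obtain ⟨A₀, k₀, hk₀1, hk₀2⟩ := stepB H g₁ (g₂ ≫ F₀.h) hg₁ hfac₀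
    have wit₀ : Wit F₀ A₀ :=
      ⟨w₀, g₁, g₂ ≫ F₀.h, g₂, hg₁, hw₀x, hw₀y, hfac₀, hgfac, rfl, k₀, hk₀1, hk₀2⟩
    have hzA₀ := ih A A₀ w1 wit₀
    rcases e with ⟨k, h1, h2⟩ | ⟨k, h1, h2⟩
    · -- FdConn F₀ F'' : k : F₀.z ⟶ F''.z, F₀.g ≫ k = F''.g, k ≫ F''.h = F₀.h
      have wit₀' : Wit F'' A₀ :=
        ⟨w₀, g₁, g₂ ≫ F₀.h, g₂ ≫ k, hg₁, hw₀x, hw₀y, hfac₀,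
          by rw [← assoc, hgfac, h1], by rw [assoc, h2], k₀, hk₀1, hk₀2⟩
      obtain ⟨w, d, eD, p, hd, hwx, hwy, hDfac, hp1, hp2, r, hr1, hr2⟩ := wit₀'
      obtain ⟨w', d', eD', p', hd', hwx', hwy', hDfac', hp1', hp2', r', hr1', hr2'⟩ := w2
      exact hzA₀.trans (sameF H IH hδ F''.g F''.h F''.lt_src F''.lt_tgt F''.fac
        d eD hd hwx hwy hDfac p hp1 hp2 d' eD' hd' hwx' hwy' hDfac' p' hp1' hp2'
        A₀ r hr1 hr2 A' r' hr1' hr2')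
    · -- FdConn F'' F₀ : k : F''.z ⟶ F₀.z, F''.g ≫ k = F₀.g, k ≫ F₀.h = F''.h
      obtain ⟨w', d', eD', p', hd', hwx', hwy', hDfac', hp1', hp2', r', hr1', hr2'⟩ := w2
      have w2' : Wit F₀ A' :=
        ⟨w', d', eD', p' ≫ k, hd', hwx', hwy', hDfac',
          by rw [← assoc, hp1', h1], by rw [assoc, h2, hp2'], r', hr1', hr2'⟩
      obtain ⟨w2, d2, eD2, p2, hd2, hwx2, hwy2, hDfac2, hp12, hp22, r2, hr12, hr22⟩ := w2'
      obtain ⟨w3, d3, eD3, p3, hd3, hwx3, hwy3, hDfac3, hp13, hp23, r3, hr13, hr23⟩ := wit₀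
      exact hzA₀.trans (mpz_symm (sameF H IH hδ F₀.g F₀.h F₀.lt_src F₀.lt_tgt F₀.fac
        d2 eD2 hd2 hwx2 hwy2 hDfac2 p2 hp12 hp22 d3 eD3 hd3 hwx3 hwy3 hDfac3 p3 hp13 hp23
        A' r2 hr12 hr22 A₀ r3 hr13 hr23))

theorem conn (H : Hyp deg) :
    ∀ (δ : Ordinal.{w}) {x y : C} (f : x ⟶ y), min (deg x) (deg y) ≤ δ →
      ∀ A B : MPFact (RaP deg) (LoP deg) f, MPZ deg A B := by
  intro δ
  induction δ using Ordinal.induction with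
  | _ δ IH =>
    intro x y f hδ A B
    by_cases hb : Basic deg f
    · rcases le_total (deg x) (deg y) with hxy | hyx
      · have degA : deg A.z = deg x := by
          by_contra hne
          have hlt : deg A.z < deg x := lt_of_le_of_ne A.memMi.2 hne
          exact hb.false ⟨A.z, A.g, A.h, A.fac, hlt, lt_of_lt_of_le hlt hxy⟩
        have degB : deg B.z = deg x := by
          by_contra hne
          have hlt : deg B.z < deg x := lt_of_le_of_ne B.memMi.2 hne
          exact hb.false ⟨B.z, B.g, B.h, B.fac, hlt, lt_of_lt_of_le hlt hxy⟩
        let K : MPFact (RaP deg) (LoP deg) f :=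
          ⟨x, 𝟙 x, f, ⟨H.hid x, le_rfl⟩, ⟨hb, hxy⟩, id_comp f⟩
        have e1 : MPConn (WbP deg) K A :=
          ⟨A.g, ⟨A.memMi.1, degA.symm⟩, id_comp A.g, A.fac⟩
        have e2 : MPConn (WbP deg) K B :=
          ⟨B.g, ⟨B.memMi.1, degB.symm⟩, id_comp B.g, B.fac⟩
        have s1 : MPZ deg A K := Relation.ReflTransGen.single (Or.inr e1)
        have s2 : MPZ deg K B := Relation.ReflTransGen.single (Or.inl e2)
        exact s1.trans s2
      · have degA : deg A.z = deg y := by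
          by_contra hne
          have hlt : deg A.z < deg y := lt_of_le_of_ne A.memP.2 hne
          exact hb.false ⟨A.z, A.g, A.h, A.fac, lt_of_lt_of_le hlt hyx, hlt⟩
        have degB : deg B.z = deg y := by
          by_contra hne
          have hlt : deg B.z < deg y := lt_of_le_of_ne B.memP.2 hne
          exact hb.false ⟨B.z, B.g, B.h, B.fac, lt_of_lt_of_le hlt hyx, hlt⟩
        let K : MPFact (RaP deg) (LoP deg) f :=
          ⟨y, f, 𝟙 y, ⟨hb, hyx⟩, ⟨H.hid y, le_rfl⟩, comp_id f⟩
        have e1 : MPConn (WbP deg) A K := ⟨A.h, ⟨A.memP.1, degA⟩, A.fac, comp_id A.h⟩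
        have e2 : MPConn (WbP deg) B K := ⟨B.h, ⟨B.memP.1, degB⟩, B.fac, comp_id B.h⟩
        have s1 : MPZ deg A K := Relation.ReflTransGen.single (Or.inl e1)
        have s2 : MPZ deg K B := Relation.ReflTransGen.single (Or.inr e2)
        exact s1.trans s2
    · obtain ⟨hA1, hA2⟩ := nonbasic_lt H hb A
      obtain ⟨hB1, hB2⟩ := nonbasic_lt H hb B
      let FA : FdFact deg f := ⟨A.z, A.g, A.h, A.fac, hA1, hA2⟩
      let FB : FdFact deg f := ⟨B.z, B.g, B.h, B.fac, hB1, hB2⟩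
      have witA : Wit FA A :=
        ⟨A.z, A.g, A.h, 𝟙 A.z, A.memMi, hA1, hA2, A.fac, comp_id A.g,
          id_comp A.h, 𝟙 A.z, comp_id A.g, id_comp A.h⟩
      have witB : Wit FB B :=
        ⟨B.z, B.g, B.h, 𝟙 B.z, B.memMi, hB1, hB2, B.fac, comp_id B.g,
          id_comp B.h, 𝟙 B.z, comp_id B.g, id_comp B.h⟩
      exact topLift H IH hδ FA FB (H.hconn f FA FB) A B witA witB

end CReedyAux


namespace CReedyFwd

variable {deg : C → Ordinal.{w}} {W P Mi : MorphismProperty C}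

structure FHyp (deg : C → Ordinal.{w}) (W P Mi : MorphismProperty C) : Prop where
  hW1 : ∀ x : C, W (𝟙 x)
  hP1 : ∀ x : C, P (𝟙 x)
  hM1 : ∀ x : C, Mi (𝟙 x)
  hWc : ∀ ⦃x y z : C⦄ (f : x ⟶ y) (g : y ⟶ z), W f → W g → W (f ≫ g)
  hPc : ∀ ⦃x y z : C⦄ (f : x ⟶ y) (g : y ⟶ z), P f → P g → P (f ≫ g)
  hMc : ∀ ⦃x y z : C⦄ (f : x ⟶ y) (g : y ⟶ z), Mi f → Mi g → Mi (f ≫ g)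
  hWPM : ∀ ⦃x y : C⦄ (f : x ⟶ y), W f → P f ∧ Mi f
  hWlev : ∀ ⦃x y : C⦄ (f : x ⟶ y), W f → deg x = deg y
  hPlt : ∀ ⦃x y : C⦄ (f : x ⟶ y), P f → ¬ W f → deg x < deg y
  hMlt : ∀ ⦃x y : C⦄ (f : x ⟶ y), Mi f → ¬ W f → deg y < deg x
  hFact : ∀ ⦃x y : C⦄ (f : x ⟶ y), Nonempty (MPFact P Mi f) ∧
    ∀ a b : MPFact P Mi f,
      Relation.ReflTransGen (fun a b => MPConn W a b ∨ MPConn W b a) a b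

lemma mi_le (H : FHyp deg W P Mi) {x y : C} {f : x ⟶ y} (h : Mi f) :
    deg y ≤ deg x := by
  by_cases hw : W f
  · exact (H.hWlev f hw).ge
  · exact (H.hMlt f h hw).le

lemma p_le (H : FHyp deg W P Mi) {x y : C} {f : x ⟶ y} (h : P f) :
    deg x ≤ deg y := by
  by_cases hw : W f
  · exact (H.hWlev f hw).le
  · exact (H.hPlt f h hw).le

lemma zz_deg (H : FHyp deg W P Mi) {x y : C} {f : x ⟶ y}
    {a b : MPFact P Mi f}
    (h : Relation.ReflTransGen (fun a b => MPConn W a b ∨ MPConn W b a) a b) :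
    deg a.z = deg b.z := by
  induction h with
  | refl => rfl
  | tail _ e ih =>
    rcases e with ⟨k, hk, _, _⟩ | ⟨k, hk, _, _⟩
    · exact ih.trans (H.hWlev k hk)
    · exact ih.trans (H.hWlev k hk).symm

lemma p_basic (H : FHyp deg W P Mi) {x y : C} {f : x ⟶ y} (h : P f) :
    Basic deg f := by
  refine ⟨fun F => ?_⟩
  obtain ⟨Q⟩ := (H.hFact F.g).1
  obtain ⟨R⟩ := (H.hFact (Q.h ≫ F.h)).1
  let S : MPFact P Mi f := ⟨R.z, Q.g ≫ R.g, R.h, H.hMc _ _ Q.memMi R.memMi,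
    R.memP, by rw [assoc, R.fac, ← assoc, Q.fac, F.fac]⟩
  let K : MPFact P Mi f := ⟨x, 𝟙 x, f, H.hM1 x, h, id_comp f⟩
  have hdeg : deg x = deg R.z := zz_deg H ((H.hFact f).2 K S)
  have h1 : deg R.z ≤ deg Q.z := mi_le H R.memMi
  have h2 : deg Q.z ≤ deg F.z := p_le H Q.memP
  exact lt_irrefl (deg x) (lt_of_le_of_lt (hdeg.le.trans (h1.trans h2)) F.lt_src)

lemma mi_basic (H : FHyp deg W P Mi) {x y : C} {f : x ⟶ y} (h : Mi f) :
    Basic deg f := by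
  refine ⟨fun F => ?_⟩
  obtain ⟨Q⟩ := (H.hFact F.h).1
  obtain ⟨R⟩ := (H.hFact (F.g ≫ Q.g)).1
  let S : MPFact P Mi f := ⟨R.z, R.g, R.h ≫ Q.h, R.memMi,
    H.hPc _ _ R.memP Q.memP, by rw [← assoc, R.fac, assoc, Q.fac, F.fac]⟩
  let K : MPFact P Mi f := ⟨y, f, 𝟙 y, h, H.hP1 y, comp_id f⟩
  have hdeg : deg y = deg R.z := zz_deg H ((H.hFact f).2 K S)
  have h1 : deg R.z ≤ deg Q.z := p_le H R.memP
  have h2 : deg Q.z ≤ deg F.z := mi_le H Q.memMi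
  exact lt_irrefl (deg y) (lt_of_le_of_lt (hdeg.le.trans (h1.trans h2)) F.lt_tgt)

lemma basic_le_p (H : FHyp deg W P Mi) {x y : C} {f : x ⟶ y}
    (hb : Basic deg f) (hle : deg x ≤ deg y) : P f := by
  obtain ⟨Q⟩ := (H.hFact f).1
  rcases lt_or_eq_of_le (mi_le H Q.memMi) with hlt | heq
  · exact absurd (hb.false ⟨Q.z, Q.g, Q.h, Q.fac, hlt, lt_of_lt_of_le hlt hle⟩) id
  · have hWg : W Q.g := by
      by_contra hnw
      exact absurd (H.hMlt Q.g Q.memMi hnw) (by rw [heq]; exact lt_irrefl _)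
    exact Q.fac ▸ H.hPc _ _ (H.hWPM _ hWg).1 Q.memP

lemma basic_ge_mi (H : FHyp deg W P Mi) {x y : C} {f : x ⟶ y}
    (hb : Basic deg f) (hge : deg y ≤ deg x) : Mi f := by
  obtain ⟨Q⟩ := (H.hFact f).1
  rcases lt_or_eq_of_le (p_le H Q.memP) with hlt | heq
  · exact absurd (hb.false ⟨Q.z, Q.g, Q.h, Q.fac, lt_of_lt_of_le hlt hge, hlt⟩) id
  · have hWh : W Q.h := by
      by_contra hnw
      exact absurd (H.hPlt Q.h Q.memP hnw) (by rw [heq]; exact lt_irrefl _)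
    exact Q.fac ▸ H.hMc _ _ Q.memMi (H.hWPM _ hWh).2

lemma basic_eq_w (H : FHyp deg W P Mi) {x y : C} {f : x ⟶ y}
    (hb : Basic deg f) (heq : deg x = deg y) : W f := by
  obtain ⟨Q⟩ := (H.hFact f).1
  rcases lt_or_eq_of_le (mi_le H Q.memMi) with hlt | heqz
  · exact absurd (hb.false ⟨Q.z, Q.g, Q.h, Q.fac, hlt, hlt.trans_eq heq⟩) id
  · have hWg : W Q.g := by
      by_contra hnw
      exact absurd (H.hMlt Q.g Q.memMi hnw) (by rw [heqz]; exact lt_irrefl _)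
    have hWh : W Q.h := by
      by_contra hnw
      exact absurd (H.hPlt Q.h Q.memP hnw)
        (by rw [heqz.trans heq]; exact lt_irrefl _)
    exact Q.fac ▸ H.hWc _ _ hWg hWh

lemma toMP (H : FHyp deg W P Mi) {x y : C} {f : x ⟶ y} (F : FdFact deg f) :
    ∃ (A : MPFact P Mi f) (h1 : deg A.z < deg x) (h2 : deg A.z < deg y),
      FdZigzag deg F ⟨A.z, A.g, A.h, A.fac, h1, h2⟩ := by
  obtain ⟨Q⟩ := (H.hFact F.g).1
  obtain ⟨R⟩ := (H.hFact (Q.h ≫ F.h)).1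
  have hQ : deg Q.z ≤ deg F.z := p_le H Q.memP
  have hR : deg R.z ≤ deg Q.z := mi_le H R.memMi
  let A : MPFact P Mi f := ⟨R.z, Q.g ≫ R.g, R.h, H.hMc _ _ Q.memMi R.memMi,
    R.memP, by rw [assoc, R.fac, ← assoc, Q.fac, F.fac]⟩
  have hA1 : deg A.z < deg x := lt_of_le_of_lt (hR.trans hQ) F.lt_src
  have hA2 : deg A.z < deg y := lt_of_le_of_lt (hR.trans hQ) F.lt_tgt
  refine ⟨A, hA1, hA2, ?_⟩
  have hDfac : Q.g ≫ (Q.h ≫ F.h) = f := by rw [← assoc, Q.fac, F.fac]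
  let D : FdFact deg f := ⟨Q.z, Q.g, Q.h ≫ F.h, hDfac,
    lt_of_le_of_lt hQ F.lt_src, lt_of_le_of_lt hQ F.lt_tgt⟩
  let FA : FdFact deg f := ⟨A.z, A.g, A.h, A.fac, hA1, hA2⟩
  have e1 : FdConn deg D F := ⟨Q.h, Q.fac, rfl⟩
  have e2 : FdConn deg D FA := ⟨R.g, rfl, R.fac⟩
  have s1 : FdZigzag deg F D := Relation.ReflTransGen.single (Or.inr e1)
  have s2 : FdZigzag deg D FA := Relation.ReflTransGen.single (Or.inl e2)
  exact s1.trans s2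

lemma mpzz (H : FHyp deg W P Mi) {x y : C} {f : x ⟶ y}
    {A B : MPFact P Mi f}
    (h : Relation.ReflTransGen (fun a b => MPConn W a b ∨ MPConn W b a) A B) :
    ∀ (ha1 : deg A.z < deg x) (ha2 : deg A.z < deg y)
      (hb1 : deg B.z < deg x) (hb2 : deg B.z < deg y),
      FdZigzag deg ⟨A.z, A.g, A.h, A.fac, ha1, ha2⟩
        ⟨B.z, B.g, B.h, B.fac, hb1, hb2⟩ := by
  induction h with
  | refl => intro _ _ _ _; exact Relation.ReflTransGen.refl
  | @tail Q B h' e ih =>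
    intro ha1 ha2 hb1 hb2
    have hQz : deg Q.z = deg B.z := by
      rcases e with ⟨k, hk, _, _⟩ | ⟨k, hk, _, _⟩
      · exact H.hWlev k hk
      · exact (H.hWlev k hk).symm
    refine (ih ha1 ha2 (hQz.trans_lt hb1) (hQz.trans_lt hb2)).tail ?_
    rcases e with ⟨k, _, h1, h2⟩ | ⟨k, _, h1, h2⟩
    · exact Or.inl ⟨k, h1, h2⟩
    · exact Or.inr ⟨k, h1, h2⟩

lemma fd_conn (H : FHyp deg W P Mi) {x y : C} (f : x ⟶ y)
    (F F' : FdFact deg f) : FdZigzag deg F F' := by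
  obtain ⟨A, ha1, ha2, zA⟩ := toMP H F
  obtain ⟨A', hb1, hb2, zA'⟩ := toMP H F'
  have hmid := mpzz H ((H.hFact f).2 A A') ha1 ha2 hb1 hb2
  exact (zA.trans hmid).trans
    (by
      haveI : Std.Symm (fun F F' : FdFact deg f => FdConn deg F F' ∨ FdConn deg F' F) :=
        ⟨fun _ _ hh => Or.symm hh⟩
      exact Relation.ReflTransGen.symmetric.symm _ _ zA')

end CReedyFwd

/-- A category with an ordinal degree function is a c-Reedy category (for some
choice of the wide subcategories `C⃡`, `C⃗`, `C⃖`) if and only if it is almost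
c-Reedy and the classes of basic non-strictly degree-raising and basic
non-strictly degree-lowering morphisms are each closed under composition. -/
theorem isCReedy_iff_almostCReedy_and_closed (deg : C → Ordinal.{w}) :
    (∃ W P Mi : MorphismProperty C, IsCReedyWith deg W P Mi) ↔
      (AlmostCReedy deg ∧
        (∀ ⦃x y z : C⦄ (f : x ⟶ y) (g : y ⟶ z),
          Raising deg f → Raising deg g → Raising deg (f ≫ g)) ∧
        (∀ ⦃x y z : C⦄ (f : x ⟶ y) (g : y ⟶ z),
          Lowering deg f → Lowering deg g → Lowering deg (f ≫ g))) := by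
  constructor
  · rintro ⟨W, P, Mi, hW1, hP1, hM1, hWc, hPc, hMc, hWPM, hWlev, hPlt, hMlt,
      hFact, hCone⟩
    have H : CReedyFwd.FHyp deg W P Mi :=
      ⟨hW1, hP1, hM1, hWc, hPc, hMc, hWPM, hWlev, hPlt, hMlt, hFact⟩
    refine ⟨⟨?_, ?_, ?_, ?_, ?_⟩, ?_, ?_⟩
    · exact fun x => CReedyFwd.p_basic H (hP1 x)
    · intro x y z f g hxy hyz hbf hbg
      exact CReedyFwd.p_basic H (hWPM _ (hWc f g (CReedyFwd.basic_eq_w H hbf hxy)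
        (CReedyFwd.basic_eq_w H hbg hyz))).1
    · exact fun x y f F F' => CReedyFwd.fd_conn H f F F'
    · intro x y z f g hbf hlt hbg heq
      exact CReedyFwd.mi_basic H (hMc f g (CReedyFwd.basic_ge_mi H hbf hlt.le)
        (hWPM g (CReedyFwd.basic_eq_w H hbg heq)).2)
    · intro x y₁ y₂ y₃ f₁ f₂ f₃ g₁ g₃ hlt e12 e23 hb1 hb2 hb3 hbg1 hbg3 q1 q2
      obtain ⟨y₀, f₀, h₁, h₃, hdeg, hMif₀, hWh1, hWh3, r1, r2, r3⟩ :=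
        hCone f₁ f₂ f₃ g₁ g₃ hlt
          (CReedyFwd.basic_ge_mi H hb1 hlt.le)
          (CReedyFwd.basic_ge_mi H hb2 (e12.symm.trans_lt hlt).le)
          (CReedyFwd.basic_ge_mi H hb3 ((e23.symm.trans e12.symm).trans_lt hlt).le)
          (CReedyFwd.basic_eq_w H hbg1 e12) (CReedyFwd.basic_eq_w H hbg3 e23.symm)
          q1 q2
      exact ⟨y₀, f₀, h₁, h₃, hdeg, CReedyFwd.mi_basic H hMif₀,
        CReedyFwd.p_basic H (hWPM _ hWh1).1, CReedyFwd.p_basic H (hWPM _ hWh3).1,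
        r1, r2, r3⟩
    · intro x y z f g hf hg
      have hp := hPc f g (CReedyFwd.basic_le_p H hf.1 hf.2)
        (CReedyFwd.basic_le_p H hg.1 hg.2)
      exact ⟨CReedyFwd.p_basic H hp, hf.2.trans hg.2⟩
    · intro x y z f g hf hg
      have hm := hMc f g (CReedyFwd.basic_ge_mi H hf.1 hf.2)
        (CReedyFwd.basic_ge_mi H hg.1 hg.2)
      exact ⟨CReedyFwd.mi_basic H hm, hg.2.trans hf.2⟩
  · rintro ⟨⟨h1, h2, h3, h4, h5⟩, hPc, hMc⟩
    have H : CReedyAux.Hyp deg := ⟨h1, hPc, hMc, h3⟩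
    refine ⟨CReedyAux.WbP deg, CReedyAux.RaP deg, CReedyAux.LoP deg,
      ?_, ?_, ?_, ?_, ?_, ?_, ?_, ?_, ?_, ?_, ?_, ?_⟩
    · exact fun x => ⟨h1 x, rfl⟩
    · exact fun x => ⟨h1 x, le_rfl⟩
    · exact fun x => ⟨h1 x, le_rfl⟩
    · exact fun x y z f g hf hg => ⟨h2 f g hf.2 hg.2 hf.1 hg.1, hf.2.trans hg.2⟩
    · exact fun x y z f g hf hg => hPc f g hf hg
    · exact fun x y z f g hf hg => hMc f g hf hg
    · exact fun x y f hf => ⟨⟨hf.1, hf.2.le⟩, ⟨hf.1, hf.2.ge⟩⟩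
    · exact fun x y f hf => hf.2
    · exact fun x y f hf hnw => lt_of_le_of_ne hf.2 (fun h => hnw ⟨hf.1, h⟩)
    · exact fun x y f hf hnw => lt_of_le_of_ne hf.2 (fun h => hnw ⟨hf.1, h.symm⟩)
    · intro x y f
      constructor
      · obtain ⟨z, g, h, hg, hh, hfac⟩ := CReedyAux.exists_fact' H f
        exact ⟨⟨z, g, h, hg, hh, hfac⟩⟩
      · exact CReedyAux.conn H (min (deg x) (deg y)) f le_rfl
    · intro x y₁ y₂ y₃ f₁ f₂ f₃ g₁ g₃ hlt hf₁ hf₂ hf₃ hg₁ hg₃ q1 q2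
      obtain ⟨y₀, f₀, k₁, k₃, hdeg, hbf₀, hb1, hb3, r1, r2, r3⟩ :=
        h5 f₁ f₂ f₃ g₁ g₃ hlt hg₁.2 hg₃.2.symm hf₁.1 hf₂.1 hf₃.1 hg₁.1 hg₃.1 q1 q2
      exact ⟨y₀, f₀, k₁, k₃, hdeg, ⟨hbf₀, (hdeg.trans_lt hlt).le⟩, ⟨hb1, hdeg⟩,
        ⟨hb3, hdeg.trans (hg₁.2.trans hg₃.2.symm)⟩, r1, r2, r3⟩
end

section
/- Every fs-Reedy category C (Reedy category with functorial but not necessarily unique factorizations) contains a full subcategory D such that the inclusion D ↪ C is an equivalence of categories and D, with the restricted degree function, is a genuine Reedy category whose raising and lowering subcategories are contained in those of C. In particular, every object x of C with non-basic identity is isomorphic to an object y of strictly smaller degree, via isomorphisms x → y in C⃖ and y → x in C⃗. -/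
open CategoryTheory Category

universe w v u

variable {C : Type u} [Category.{v} C]

/-- Kan's notion of Reedy category, with the subcategories `P = C⃗` (raising)
and `Mi = C⃖` (lowering) given as data: both are wide subcategories, nonidentity
`P`-morphisms strictly raise degree, nonidentity `Mi`-morphisms strictly lower
degree, and every morphism factors uniquely as a `Mi`-morphism followed by a
`P`-morphism. -/
def IsReedyWith (deg : C → Ordinal.{w}) (P Mi : MorphismProperty C) : Prop :=
  (∀ x : C, P (𝟙 x)) ∧ (∀ x : C, Mi (𝟙 x)) ∧
  (∀ ⦃x y z : C⦄ (f : x ⟶ y) (g : y ⟶ z), P f → P g → P (f ≫ g)) ∧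
  (∀ ⦃x y z : C⦄ (f : x ⟶ y) (g : y ⟶ z), Mi f → Mi g → Mi (f ≫ g)) ∧
  (∀ ⦃x y : C⦄ (f : x ⟶ y), P f → deg x < deg y ∨ (x = y ∧ HEq f (𝟙 x))) ∧
  (∀ ⦃x y : C⦄ (f : x ⟶ y), Mi f → deg y < deg x ∨ (x = y ∧ HEq f (𝟙 x))) ∧
  (∀ ⦃x y : C⦄ (f : x ⟶ y), ∃ (z : C) (g : x ⟶ z) (h : z ⟶ y),
    Mi g ∧ P h ∧ g ≫ h = f ∧
      ∀ (z' : C) (g' : x ⟶ z') (h' : z' ⟶ y), Mi g' → P h' → g' ≫ h' = f →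
        z = z' ∧ HEq g g' ∧ HEq h h')

/-- A functorial (but not necessarily unique) factorization of every morphism as
a `Mi`-morphism followed by a `P`-morphism: every commuting square between `f`
and `f'` induces a compatible morphism between the middle objects,
functorially. -/
structure FunctorialFact (P Mi : MorphismProperty C) where
  mid : ∀ {x y : C}, (x ⟶ y) → C
  left : ∀ {x y : C} (f : x ⟶ y), x ⟶ mid f
  right : ∀ {x y : C} (f : x ⟶ y), mid f ⟶ y
  left_mem : ∀ {x y : C} (f : x ⟶ y), Mi (left f)
  right_mem : ∀ {x y : C} (f : x ⟶ y), P (right f)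
  fac : ∀ {x y : C} (f : x ⟶ y), left f ≫ right f = f
  map : ∀ {x y x' y' : C} (f : x ⟶ y) (f' : x' ⟶ y') (u : x ⟶ x') (v : y ⟶ y'),
    f ≫ v = u ≫ f' → (mid f ⟶ mid f')
  map_left : ∀ {x y x' y' : C} (f : x ⟶ y) (f' : x' ⟶ y') (u : x ⟶ x')
    (v : y ⟶ y') (hsq : f ≫ v = u ≫ f'),
    left f ≫ map f f' u v hsq = u ≫ left f'
  map_right : ∀ {x y x' y' : C} (f : x ⟶ y) (f' : x' ⟶ y') (u : x ⟶ x')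
    (v : y ⟶ y') (hsq : f ≫ v = u ≫ f'),
    map f f' u v hsq ≫ right f' = right f ≫ v
  map_id : ∀ {x y : C} (f : x ⟶ y) (hsq : f ≫ 𝟙 y = 𝟙 x ≫ f),
    map f f (𝟙 x) (𝟙 y) hsq = 𝟙 (mid f)
  map_comp : ∀ {x y x' y' x'' y'' : C} (f : x ⟶ y) (f' : x' ⟶ y')
    (f'' : x'' ⟶ y'') (u : x ⟶ x') (v : y ⟶ y') (u' : x' ⟶ x'') (v' : y' ⟶ y'')
    (hsq : f ≫ v = u ≫ f') (hsq' : f' ≫ v' = u' ≫ f'')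
    (hsq'' : f ≫ (v ≫ v') = (u ≫ u') ≫ f''),
    map f f'' (u ≫ u') (v ≫ v') hsq'' = map f f' u v hsq ≫ map f' f'' u' v' hsq'

namespace FsReedyAux

variable {C : Type u} [Category.{v} C]

lemma compA {x m : C} (e : x = m) (l : x ⟶ m) (hl : HEq l (𝟙 x)) :
    l ≫ eqToHom e.symm = 𝟙 x := by
  subst e; simp [eq_of_heq hl]

lemma compB {m y : C} (e : m = y) (r : m ⟶ y) (hr : HEq r (𝟙 m)) :
    eqToHom e.symm ≫ r = 𝟙 y := by
  subst e; simp [eq_of_heq hr]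

lemma compC {m z : C} (e : m = z) (r : m ⟶ z) (hr : HEq r (𝟙 m)) {x : C}
    (l : x ⟶ m) (f : x ⟶ z) (hf : l ≫ r = f) : f ≫ eqToHom e.symm = l := by
  subst e; rw [← hf, eq_of_heq hr]; simp

lemma compD {x m : C} (e : x = m) (l : x ⟶ m) (hl : HEq l (𝟙 x)) {y : C}
    (r : m ⟶ y) (f : x ⟶ y) (hf : l ≫ r = f) : eqToHom e.symm ≫ f = r := by
  subst e; rw [← hf, eq_of_heq hl]; simp

lemma memE {Q : MorphismProperty C} {x m : C} (e : x = m) (l : x ⟶ m)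
    (hl : HEq l (𝟙 x)) {y : C} (r : m ⟶ y) (f : x ⟶ y) (hf : l ≫ r = f)
    (hr : Q r) : Q f := by
  subst e; rw [← hf, eq_of_heq hl, Category.id_comp]; exact hr

lemma memF {Q : MorphismProperty C} {m y : C} (e : m = y) (r : m ⟶ y)
    (hr : HEq r (𝟙 m)) {x : C} (l : x ⟶ m) (f : x ⟶ y) (hf : l ≫ r = f)
    (hl : Q l) : Q f := by
  subst e; rw [← hf, eq_of_heq hr, Category.comp_id]; exact hl

section

variable (deg : C → Ordinal.{w}) {P Mi : MorphismProperty C}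

/-- Degree of the middle object of the functorial factorization is at most the
degree of the source. -/
lemma mid_le_src
    (hMs : ∀ ⦃x y : C⦄ (f : x ⟶ y), Mi f → deg y < deg x ∨ (x = y ∧ HEq f (𝟙 x)))
    (FF : FunctorialFact P Mi) {x y : C} (f : x ⟶ y) :
    deg (FF.mid f) ≤ deg x := by
  rcases hMs (FF.left f) (FF.left_mem f) with h | ⟨e, _⟩
  · exact h.le
  · exact le_of_eq (congrArg deg e.symm)

lemma mid_le_tgt
    (hPs : ∀ ⦃x y : C⦄ (f : x ⟶ y), P f → deg x < deg y ∨ (x = y ∧ HEq f (𝟙 x)))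
    (FF : FunctorialFact P Mi) {x y : C} (f : x ⟶ y) :
    deg (FF.mid f) ≤ deg y := by
  rcases hPs (FF.right f) (FF.right_mem f) with h | ⟨e, _⟩
  · exact h.le
  · exact le_of_eq (congrArg deg e)

/-- For a basic morphism that non-strictly raises degree, the left part of its
functorial factorization is an identity. -/
lemma basic_left
    (hMs : ∀ ⦃x y : C⦄ (f : x ⟶ y), Mi f → deg y < deg x ∨ (x = y ∧ HEq f (𝟙 x)))
    (FF : FunctorialFact P Mi) {x y : C} (f : x ⟶ y) (hb : Basic deg f)
    (hle : deg x ≤ deg y) : x = FF.mid f ∧ HEq (FF.left f) (𝟙 x) := by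
  rcases hMs (FF.left f) (FF.left_mem f) with h | he
  · exact (hb.false
      ⟨FF.mid f, FF.left f, FF.right f, FF.fac f, h, lt_of_lt_of_le h hle⟩).elim
  · exact he

/-- For a basic morphism that non-strictly lowers degree, the right part of its
functorial factorization is an identity. -/
lemma basic_right
    (hPs : ∀ ⦃x y : C⦄ (f : x ⟶ y), P f → deg x < deg y ∨ (x = y ∧ HEq f (𝟙 x)))
    (FF : FunctorialFact P Mi) {x y : C} (f : x ⟶ y) (hb : Basic deg f)
    (hle : deg y ≤ deg x) :
    FF.mid f = y ∧ HEq (FF.right f) (𝟙 (FF.mid f)) := by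
  rcases hPs (FF.right f) (FF.right_mem f) with h | he
  · exact (hb.false
      ⟨FF.mid f, FF.left f, FF.right f, FF.fac f, lt_of_lt_of_le h hle, h⟩).elim
  · exact he

/-- Basic degree-raising morphisms lie in `P`. -/
lemma raising_mem
    (hMs : ∀ ⦃x y : C⦄ (f : x ⟶ y), Mi f → deg y < deg x ∨ (x = y ∧ HEq f (𝟙 x)))
    (FF : FunctorialFact P Mi) {x y : C} (f : x ⟶ y) (hb : Basic deg f)
    (hle : deg x ≤ deg y) : P f := by
  obtain ⟨e, hl⟩ := basic_left deg hMs FF f hb hle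
  exact memE e (FF.left f) hl (FF.right f) f (FF.fac f) (FF.right_mem f)

/-- Basic degree-lowering morphisms lie in `Mi`. -/
lemma lowering_mem
    (hPs : ∀ ⦃x y : C⦄ (f : x ⟶ y), P f → deg x < deg y ∨ (x = y ∧ HEq f (𝟙 x)))
    (FF : FunctorialFact P Mi) {x y : C} (f : x ⟶ y) (hb : Basic deg f)
    (hle : deg y ≤ deg x) : Mi f := by
  obtain ⟨e, hr⟩ := basic_right deg hPs FF f hb hle
  exact memF e (FF.right f) hr (FF.left f) f (FF.fac f) (FF.left_mem f)

/-- A basic level morphism is an identity. -/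
lemma basic_level
    (hPs : ∀ ⦃x y : C⦄ (f : x ⟶ y), P f → deg x < deg y ∨ (x = y ∧ HEq f (𝟙 x)))
    (hMs : ∀ ⦃x y : C⦄ (f : x ⟶ y), Mi f → deg y < deg x ∨ (x = y ∧ HEq f (𝟙 x)))
    (FF : FunctorialFact P Mi) {x y : C} (f : x ⟶ y) (hb : Basic deg f)
    (he : deg x = deg y) : x = y ∧ HEq f (𝟙 x) := by
  rcases hPs f (raising_mem deg hMs FF f hb he.le) with h | h
  · rw [he] at h; exact absurd h (lt_irrefl _)
  · exact h

/-- Every morphism admits a factorization with basic parts through an object of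
minimal degree whose identity is basic. -/
lemma exists_min {x y : C} (f : x ⟶ y) :
    ∃ (z : C) (g : x ⟶ z) (h : z ⟶ y), g ≫ h = f ∧ Basic deg (𝟙 z) ∧
      Basic deg g ∧ Basic deg h ∧ deg z ≤ deg x ∧ deg z ≤ deg y ∧
      ∀ (w : C) (a : x ⟶ w) (b : w ⟶ y), a ≫ b = f → deg z ≤ deg w := by
  set S : Set Ordinal.{w} :=
    {δ | ∃ (z : C) (g : x ⟶ z) (h : z ⟶ y), g ≫ h = f ∧ deg z = δ} with hSdef
  have hne : S.Nonempty := ⟨deg y, y, f, 𝟙 y, Category.comp_id f, rfl⟩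
  obtain ⟨z, g, h, hfac, hdz⟩ := Ordinal.lt_wf.min_mem S hne
  have hmin : ∀ (w : C) (a : x ⟶ w) (b : w ⟶ y), a ≫ b = f → deg z ≤ deg w := by
    intro w a b hab
    rw [hdz]
    exact le_of_not_gt (Ordinal.lt_wf.not_lt_min S ⟨w, a, b, hab, rfl⟩)
  refine ⟨z, g, h, hfac, ⟨fun F => ?_⟩, ⟨fun F => ?_⟩, ⟨fun F => ?_⟩, ?_, ?_, hmin⟩
  · obtain ⟨w, a, b, fab, l1, _⟩ := F
    refine absurd (hmin w (g ≫ a) (b ≫ h) ?_) (not_le.mpr l1)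
    calc (g ≫ a) ≫ (b ≫ h) = g ≫ (a ≫ b) ≫ h := by simp only [Category.assoc]
      _ = g ≫ 𝟙 z ≫ h := by rw [fab]
      _ = f := by rw [Category.id_comp]; exact hfac
  · obtain ⟨w, a, b, fab, _, l2⟩ := F
    refine absurd (hmin w a (b ≫ h) ?_) (not_le.mpr l2)
    rw [← Category.assoc, fab]; exact hfac
  · obtain ⟨w, a, b, fab, l1, _⟩ := F
    refine absurd (hmin w (g ≫ a) b ?_) (not_le.mpr l1)
    rw [Category.assoc, fab]; exact hfac
  · exact hmin x (𝟙 x) f (Category.id_comp f)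
  · exact hmin y f (𝟙 y) (Category.comp_id f)

/-- A factorization with basic parts goes through an object of minimal degree. -/
lemma fact_min
    (hPs : ∀ ⦃x y : C⦄ (f : x ⟶ y), P f → deg x < deg y ∨ (x = y ∧ HEq f (𝟙 x)))
    (hMs : ∀ ⦃x y : C⦄ (f : x ⟶ y), Mi f → deg y < deg x ∨ (x = y ∧ HEq f (𝟙 x)))
    (FF : FunctorialFact P Mi) {x z y : C} (g : x ⟶ z) (h : z ⟶ y)
    (hgb : Basic deg g) (hhb : Basic deg h) (hzx : deg z ≤ deg x)
    (hzy : deg z ≤ deg y) (w : C) (a : x ⟶ w) (b : w ⟶ y)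
    (hab : a ≫ b = g ≫ h) : deg z ≤ deg w := by
  by_contra hc
  push_neg at hc
  obtain ⟨e, hl⟩ := basic_left deg hMs FF h hhb hzy
  have hk : FF.left a ≫ (FF.map a h g b hab ≫ eqToHom e.symm) = g := by
    rw [← Category.assoc, FF.map_left a h g b hab, Category.assoc,
      compA e (FF.left h) hl, Category.comp_id]
  have hmw : deg (FF.mid a) ≤ deg w := mid_le_tgt deg hPs FF a
  exact hgb.false ⟨FF.mid a, FF.left a, FF.map a h g b hab ≫ eqToHom e.symm, hk,
    lt_of_le_of_lt hmw (lt_of_lt_of_le hc hzx), lt_of_le_of_lt hmw hc⟩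

/-- Uniqueness of factorizations with basic parts. -/
lemma fact_unique
    (hPs : ∀ ⦃x y : C⦄ (f : x ⟶ y), P f → deg x < deg y ∨ (x = y ∧ HEq f (𝟙 x)))
    (hMs : ∀ ⦃x y : C⦄ (f : x ⟶ y), Mi f → deg y < deg x ∨ (x = y ∧ HEq f (𝟙 x)))
    (FF : FunctorialFact P Mi) {x y z z' : C} (g : x ⟶ z) (h : z ⟶ y)
    (g' : x ⟶ z') (h' : z' ⟶ y) (hgb : Basic deg g) (hhb : Basic deg h)
    (hgb' : Basic deg g') (hhb' : Basic deg h') (hzx : deg z ≤ deg x)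
    (hzy : deg z ≤ deg y) (hzx' : deg z' ≤ deg x) (hzy' : deg z' ≤ deg y)
    (hfac : g ≫ h = g' ≫ h') : z = z' ∧ HEq g g' ∧ HEq h h' := by
  have h1 : deg z ≤ deg z' :=
    fact_min deg hPs hMs FF g h hgb hhb hzx hzy z' g' h' hfac.symm
  have h2 : deg z' ≤ deg z :=
    fact_min deg hPs hMs FF g' h' hgb' hhb' hzx' hzy' z g h hfac
  obtain ⟨e1, hr1⟩ := basic_right deg hPs FF g' hgb' hzx'
  obtain ⟨e2, hl2⟩ := basic_left deg hMs FF h hhb hzy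
  have hsq : g' ≫ h' = g ≫ h := hfac.symm
  obtain ⟨k, hk1, hk2⟩ : ∃ k : z' ⟶ z, g' ≫ k = g ∧ k ≫ h = h' := by
    refine ⟨eqToHom e1.symm ≫ FF.map g' h g h' hsq ≫ eqToHom e2.symm, ?_, ?_⟩
    · rw [← Category.assoc, compC e1 (FF.right g') hr1 (FF.left g') g' (FF.fac g'),
        ← Category.assoc, FF.map_left g' h g h' hsq, Category.assoc,
        compA e2 (FF.left h) hl2, Category.comp_id]
    · rw [Category.assoc, Category.assoc,
        compD e2 (FF.left h) hl2 (FF.right h) h (FF.fac h),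
        FF.map_right g' h g h' hsq, ← Category.assoc,
        compB e1 (FF.right g') hr1, Category.id_comp]
  have hkb : Basic deg k := by
    constructor
    intro F
    obtain ⟨w, a, b, fab, _, l2⟩ := F
    have : (g' ≫ a) ≫ (b ≫ h) = g ≫ h := by
      calc (g' ≫ a) ≫ (b ≫ h) = g' ≫ (a ≫ b) ≫ h := by simp only [Category.assoc]
        _ = (g' ≫ k) ≫ h := by rw [fab, Category.assoc]
        _ = g ≫ h := by rw [hk1]
    exact absurd (fact_min deg hPs hMs FF g h hgb hhb hzx hzy w (g' ≫ a)
      (b ≫ h) this) (not_le.mpr l2)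
  obtain ⟨ez, hk⟩ :=
    basic_level deg hPs hMs FF k hkb (le_antisymm h2 h1)
  subst ez
  have hk' : k = 𝟙 z' := eq_of_heq hk
  rw [hk', Category.comp_id] at hk1
  rw [hk', Category.id_comp] at hk2
  exact ⟨rfl, heq_of_eq hk1.symm, heq_of_eq hk2⟩

/-- Composites of basic degree-raising morphisms are basic. -/
lemma basic_comp_raising
    (hPs : ∀ ⦃x y : C⦄ (f : x ⟶ y), P f → deg x < deg y ∨ (x = y ∧ HEq f (𝟙 x)))
    (hMs : ∀ ⦃x y : C⦄ (f : x ⟶ y), Mi f → deg y < deg x ∨ (x = y ∧ HEq f (𝟙 x)))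
    (FF : FunctorialFact P Mi) {x y z : C} (f : x ⟶ y) (g : y ⟶ z)
    (hfb : Basic deg f) (hgb : Basic deg g) (hxy : deg x ≤ deg y)
    (hyz : deg y ≤ deg z) : Basic deg (f ≫ g) := by
  constructor
  intro F
  obtain ⟨w, a, b, fab, l1, _⟩ := F
  obtain ⟨w₀, a₀, b₀, hfac₀, _, ha₀, hb₀, hw₀x, hw₀z, hmin⟩ :=
    exists_min deg (f ≫ g)
  have hwx : deg w₀ < deg x := lt_of_le_of_lt (hmin w a b fab) l1
  obtain ⟨e1, hr1⟩ := basic_right deg hPs FF a₀ ha₀ hw₀x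
  obtain ⟨e2, hl2⟩ := basic_left deg hMs FF g hgb hyz
  have hτ : a₀ ≫ (eqToHom e1.symm ≫ FF.map a₀ g f b₀ hfac₀ ≫ eqToHom e2.symm)
      = f := by
    rw [← Category.assoc, compC e1 (FF.right a₀) hr1 (FF.left a₀) a₀ (FF.fac a₀),
      ← Category.assoc, FF.map_left a₀ g f b₀ hfac₀, Category.assoc,
      compA e2 (FF.left g) hl2, Category.comp_id]
  exact hfb.false ⟨w₀, a₀, _, hτ, hwx, lt_of_lt_of_le hwx hxy⟩

/-- Composites of basic degree-lowering morphisms are basic. -/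
lemma basic_comp_lowering
    (hPs : ∀ ⦃x y : C⦄ (f : x ⟶ y), P f → deg x < deg y ∨ (x = y ∧ HEq f (𝟙 x)))
    (hMs : ∀ ⦃x y : C⦄ (f : x ⟶ y), Mi f → deg y < deg x ∨ (x = y ∧ HEq f (𝟙 x)))
    (FF : FunctorialFact P Mi) {x y z : C} (f : x ⟶ y) (g : y ⟶ z)
    (hfb : Basic deg f) (hgb : Basic deg g) (hyx : deg y ≤ deg x)
    (hzy : deg z ≤ deg y) : Basic deg (f ≫ g) := by
  constructor
  intro F
  obtain ⟨w, a, b, fab, _, l2⟩ := F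
  obtain ⟨w₀, a₀, b₀, hfac₀, _, ha₀, hb₀, hw₀x, hw₀z, hmin⟩ :=
    exists_min deg (f ≫ g)
  have hwz : deg w₀ < deg z := lt_of_le_of_lt (hmin w a b fab) l2
  obtain ⟨e1, hr1⟩ := basic_right deg hPs FF f hfb hyx
  obtain ⟨e2, hl2⟩ := basic_left deg hMs FF b₀ hb₀ hw₀z
  have hsq : f ≫ g = a₀ ≫ b₀ := hfac₀.symm
  have hτ : (eqToHom e1.symm ≫ FF.map f b₀ a₀ g hsq ≫ eqToHom e2.symm) ≫ b₀
      = g := by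
    rw [Category.assoc, Category.assoc,
      compD e2 (FF.left b₀) hl2 (FF.right b₀) b₀ (FF.fac b₀),
      FF.map_right f b₀ a₀ g hsq, ← Category.assoc,
      compB e1 (FF.right f) hr1, Category.id_comp]
  exact hgb.false ⟨w₀, _, b₀, hτ, lt_of_lt_of_le hwz hzy, hwz⟩

/-- Every object whose identity is not basic is a retract of itself through a
strictly smaller object, via a `Mi`-morphism and a `P`-morphism that are
mutually inverse isomorphisms. -/
lemma retract
    (hPs : ∀ ⦃x y : C⦄ (f : x ⟶ y), P f → deg x < deg y ∨ (x = y ∧ HEq f (𝟙 x)))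
    (hMs : ∀ ⦃x y : C⦄ (f : x ⟶ y), Mi f → deg y < deg x ∨ (x = y ∧ HEq f (𝟙 x)))
    (FF : FunctorialFact P Mi) (x : C) (hx : ¬ Basic deg (𝟙 x)) :
    ∃ (y : C) (g : x ⟶ y) (h : y ⟶ x), deg y < deg x ∧ Mi g ∧ P h ∧
      g ≫ h = 𝟙 x ∧ h ≫ g = 𝟙 y := by
  obtain ⟨z, g, h, hfac, hz, hgb, hhb, hzx, _, hmin⟩ := exists_min deg (𝟙 x)
  obtain ⟨⟨w', a', b', fab', l1', _⟩⟩ :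
      Nonempty (FdFact deg (𝟙 x)) := not_isEmpty_iff.mp hx
  have hlt : deg z < deg x := lt_of_le_of_lt (hmin w' a' b' fab') l1'
  have heb : Basic deg (h ≫ g) := by
    constructor
    intro F
    obtain ⟨w, a, b, fab, l1, _⟩ := F
    refine absurd (hmin w (g ≫ a) (b ≫ h) ?_) (not_le.mpr l1)
    calc (g ≫ a) ≫ (b ≫ h) = g ≫ (a ≫ b) ≫ h := by simp only [Category.assoc]
      _ = (g ≫ h) ≫ (g ≫ h) := by rw [fab]; simp only [Category.assoc]
      _ = 𝟙 x := by rw [hfac, Category.id_comp]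
  obtain ⟨_, hid⟩ := basic_level deg hPs hMs FF (h ≫ g) heb rfl
  exact ⟨z, g, h, hlt, lowering_mem deg hPs FF g hgb hzx,
    raising_mem deg hMs FF h hhb hzx, hfac, eq_of_heq hid⟩

/-- Every object is isomorphic to an object whose identity is basic. -/
lemma to_D
    (hPs : ∀ ⦃x y : C⦄ (f : x ⟶ y), P f → deg x < deg y ∨ (x = y ∧ HEq f (𝟙 x)))
    (hMs : ∀ ⦃x y : C⦄ (f : x ⟶ y), Mi f → deg y < deg x ∨ (x = y ∧ HEq f (𝟙 x)))
    (FF : FunctorialFact P Mi) (x : C) :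
    ∃ (d : C) (u : x ⟶ d) (v : d ⟶ x),
      Basic deg (𝟙 d) ∧ u ≫ v = 𝟙 x ∧ v ≫ u = 𝟙 d := by
  have main : ∀ δ : Ordinal.{w}, ∀ x : C, deg x = δ →
      ∃ (d : C) (u : x ⟶ d) (v : d ⟶ x),
        Basic deg (𝟙 d) ∧ u ≫ v = 𝟙 x ∧ v ≫ u = 𝟙 d := by
    intro δ
    induction δ using Ordinal.induction with
    | h δ IH =>
      intro x hδ
      by_cases hb : Basic deg (𝟙 x)
      · exact ⟨x, 𝟙 x, 𝟙 x, hb, Category.id_comp _, Category.id_comp _⟩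
      · obtain ⟨y, g, h, hlt, _, _, hgh, hhg⟩ := retract deg hPs hMs FF x hb
        obtain ⟨d, u, v, hd, huv, hvu⟩ := IH (deg y) (hδ ▸ hlt) y rfl
        refine ⟨d, g ≫ u, v ≫ h, hd, ?_, ?_⟩
        · calc (g ≫ u) ≫ (v ≫ h) = g ≫ (u ≫ v) ≫ h := by simp only [Category.assoc]
            _ = 𝟙 x := by rw [huv, Category.id_comp, hgh]
        · calc (v ≫ h) ≫ (g ≫ u) = v ≫ (h ≫ g) ≫ u := by simp only [Category.assoc]
            _ = 𝟙 d := by rw [hhg, Category.id_comp, hvu]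
  exact main (deg x) x rfl

end

end FsReedyAux

/-- Every fs-Reedy category (Reedy category with functorial but not necessarily
unique factorizations) contains a full subcategory `D` such that the inclusion
`D ↪ C` is an equivalence of categories and `D`, with the restricted degree
function, is a genuine Reedy category whose raising and lowering subcategories
are contained in those of `C`.  In particular, every object `x` whose identity
is not basic is isomorphic to an object of strictly smaller degree via inverse
isomorphisms lying in `C⃖` and `C⃗` respectively. -/
theorem fsReedy_has_reedy_full_subcategory (deg : C → Ordinal.{w})
    (P Mi : MorphismProperty C)
    (hPid : ∀ x : C, P (𝟙 x)) (hMid : ∀ x : C, Mi (𝟙 x))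
    (hPcomp : ∀ ⦃x y z : C⦄ (f : x ⟶ y) (g : y ⟶ z), P f → P g → P (f ≫ g))
    (hMcomp : ∀ ⦃x y z : C⦄ (f : x ⟶ y) (g : y ⟶ z), Mi f → Mi g → Mi (f ≫ g))
    (hPstrict : ∀ ⦃x y : C⦄ (f : x ⟶ y), P f →
      deg x < deg y ∨ (x = y ∧ HEq f (𝟙 x)))
    (hMstrict : ∀ ⦃x y : C⦄ (f : x ⟶ y), Mi f →
      deg y < deg x ∨ (x = y ∧ HEq f (𝟙 x)))
    (FF : FunctorialFact P Mi) :
    (∃ D : C → Prop,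
      (ObjectProperty.ι D).IsEquivalence ∧
      ∃ P' M' : MorphismProperty (ObjectProperty.FullSubcategory D),
        IsReedyWith (fun X => deg X.obj) P' M' ∧
        (∀ ⦃X Y : ObjectProperty.FullSubcategory D⦄ (f : X ⟶ Y),
          P' f → P ((ObjectProperty.ι D).map f)) ∧
        (∀ ⦃X Y : ObjectProperty.FullSubcategory D⦄ (f : X ⟶ Y),
          M' f → Mi ((ObjectProperty.ι D).map f))) ∧
    (∀ x : C, ¬ Basic deg (𝟙 x) →
      ∃ (y : C) (g : x ⟶ y) (h : y ⟶ x), deg y < deg x ∧ Mi g ∧ P h ∧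
        g ≫ h = 𝟙 x ∧ h ≫ g = 𝟙 y) := by
  
  constructor
  · refine ⟨fun x => Basic deg (𝟙 x), ?_, ?_⟩
    · haveI : (ObjectProperty.ι fun x => Basic deg (𝟙 x)).EssSurj := by
        constructor
        intro x
        obtain ⟨d, u, v, hd, huv, hvu⟩ :=
          FsReedyAux.to_D deg hPstrict hMstrict FF x
        exact ⟨⟨d, hd⟩, ⟨⟨v, u, hvu, huv⟩⟩⟩
      exact { }
    · refine ⟨fun X Y f => Basic deg f.hom ∧ deg X.obj ≤ deg Y.obj,
        fun X Y f => Basic deg f.hom ∧ deg Y.obj ≤ deg X.obj,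
        ⟨?_, ?_, ?_, ?_, ?_, ?_, ?_⟩, ?_, ?_⟩
      · exact fun X => ⟨X.property, le_rfl⟩
      · exact fun X => ⟨X.property, le_rfl⟩
      · intro X Y Z f g hf hg
        exact ⟨FsReedyAux.basic_comp_raising deg hPstrict hMstrict FF
          f.hom g.hom hf.1 hg.1 hf.2 hg.2,
          hf.2.trans hg.2⟩
      · intro X Y Z f g hf hg
        exact ⟨FsReedyAux.basic_comp_lowering deg hPstrict hMstrict FF
          f.hom g.hom hf.1 hg.1 hf.2 hg.2,
          hg.2.trans hf.2⟩
      · intro X Y f hf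
        rcases hf.2.lt_or_eq with h | h
        · exact Or.inl h
        · obtain ⟨he, hfid⟩ := FsReedyAux.basic_level deg hPstrict hMstrict FF
            f.hom hf.1 h
          obtain ⟨xo, xp⟩ := X
          obtain ⟨yo, yp⟩ := Y
          have he' : xo = yo := he
          subst he'
          exact Or.inr ⟨rfl, heq_of_eq (InducedCategory.hom_ext (eq_of_heq hfid))⟩
      · intro X Y f hf
        rcases lt_or_eq_of_le hf.2 with h | h
        · exact Or.inl h
        · obtain ⟨he, hfid⟩ := FsReedyAux.basic_level deg hPstrict hMstrict FF
            f.hom hf.1 (h.symm)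
          obtain ⟨xo, xp⟩ := X
          obtain ⟨yo, yp⟩ := Y
          have he' : xo = yo := he
          subst he'
          exact Or.inr ⟨rfl, heq_of_eq (InducedCategory.hom_ext (eq_of_heq hfid))⟩
      · intro X Y f
        obtain ⟨z, g, h, hfac, hz, hgb, hhb, hzx, hzy, hmin⟩ :=
          FsReedyAux.exists_min deg f.hom
        refine ⟨⟨z, hz⟩, ObjectProperty.homMk g, ObjectProperty.homMk h, ⟨hgb, hzx⟩, ⟨hhb, hzy⟩,
          InducedCategory.hom_ext hfac, ?_⟩
        intro Z' g' h' hg' hh' hfac'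
        obtain ⟨ez, hgg, hhh⟩ := FsReedyAux.fact_unique deg hPstrict hMstrict FF
          g h g'.hom h'.hom hgb hhb hg'.1 hh'.1
          hzx hzy hg'.2 hh'.2 (hfac.trans (congrArg InducedCategory.Hom.hom hfac').symm)
        obtain ⟨z'o, z'p⟩ := Z'
        have ez' : z = z'o := ez
        subst ez'
        exact ⟨rfl, heq_of_eq (InducedCategory.hom_ext (eq_of_heq hgg)),
            heq_of_eq (InducedCategory.hom_ext (eq_of_heq hhh))⟩
      · intro X Y f hf
        exact FsReedyAux.raising_mem deg hMstrict FF f.hom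
          hf.1 hf.2
      · intro X Y f hf
        exact FsReedyAux.lowering_mem deg hPstrict FF f.hom
          hf.1 hf.2
  · intro x hx
    exact FsReedyAux.retract deg hPstrict hMstrict FF x hx
end
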